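/- Let k ≥ 1 and q be real numbers, and let x₀, x₂, x₃, x₄, y₁, y₂, y₃, y₄, u₂, u₄ be vectors in ℝⁿ satisfying x₃ = x₂ - y₁ - u₂ + (1/(k+1))(x₀ - x₂) and x₄ = x₂ - y₃ - u₄ + (1/(k+1))(x₀ - x₂). Then (k(k+1)/2)(‖y₂+u₂‖² + ‖y₂-y₁‖²) + k⟨y₂+u₂, x₂-x₀⟩ - ((k+1)(k+2)/2)(‖y₄+u₄‖² + ‖y₄-y₃‖²) - (k+1)⟨y₄+u₄, x₄-x₀⟩ - k(k+1)⟨y₄+u₄-y₂-u₂, x₄-x₂⟩ - (k(k+1)/(4q))(q‖x₄-x₃‖² - ‖y₄-y₃‖²) = (k(k+1)/4)‖u₄-u₂+y₁-2y₂+y₃‖² + (((1-4q)k-4q)/(4q))(k+1)‖y₃-y₄‖² + (k+1)⟨y₃-y₄, y₄+u₄⟩. -/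
import Mathlib


open scoped RealInnerProductSpace

theorem stmt_8 (n : ℕ) (k q : ℝ) (hk : 1 ≤ k) (hq0 : 0 < q) (hq1 : q < 1)
    (x₀ x₂ x₃ x₄ y₁ y₂ y₃ y₄ u₂ u₄ : EuclideanSpace ℝ (Fin n))
    (h3 : x₃ = x₂ - y₁ - u₂ + (1 / (k + 1)) • (x₀ - x₂))
    (h4 : x₄ = x₂ - y₃ - u₄ + (1 / (k + 1)) • (x₀ - x₂)) :
    (k * (k + 1) / 2) * (‖y₂ + u₂‖ ^ 2 + ‖y₂ - y₁‖ ^ 2)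
      + k * ⟪y₂ + u₂, x₂ - x₀⟫
      - ((k + 1) * (k + 2) / 2) * (‖y₄ + u₄‖ ^ 2 + ‖y₄ - y₃‖ ^ 2)
      - (k + 1) * ⟪y₄ + u₄, x₄ - x₀⟫
      - k * (k + 1) * ⟪y₄ + u₄ - y₂ - u₂, x₄ - x₂⟫
      - (k * (k + 1) / (4 * q)) * (q * ‖x₄ - x₃‖ ^ 2 - ‖y₄ - y₃‖ ^ 2)
    = (k * (k + 1) / 4) * ‖u₄ - u₂ + y₁ - (2 : ℝ) • y₂ + y₃‖ ^ 2
      + (((1 - 4 * q) * k - 4 * q) / (4 * q)) * (k + 1) * ‖y₃ - y₄‖ ^ 2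
      + (k + 1) * ⟪y₃ - y₄, y₄ + u₄⟫ := by
  have hq : q ≠ 0 := ne_of_gt hq0
  subst h3 h4
  simp only [← real_inner_self_eq_norm_sq, PiLp.inner_apply, RCLike.inner_apply,
    starRingEnd_apply, star_trivial, Finset.mul_sum, ← Finset.sum_div,
    ← Finset.sum_add_distrib, ← Finset.sum_sub_distrib]
  apply Finset.sum_congr rfl
  intro i _
  simp only [PiLp.sub_apply, PiLp.add_apply, PiLp.smul_apply, smul_eq_mul]
  have hk1 : k + 1 ≠ 0 := by nlinarith
  field_simp
  ring
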